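/- Assume s = 1/2 and let α ∈ (0, 1). Then there exists a constant C > 0 depending only on d, Λ and α such that for every φ ∈ C^1(ℝ^d) with φ and ∇φ bounded and with finite seminorm [φ]_{C^{1,α}(ℝ^d)} = [∇φ]_{C^{0,α}(ℝ^d)}, the values M_ρ^± φ(x) are finite for every x ∈ ℝ^d and for all x, y ∈ ℝ^d one has |M_ρ^± φ(x) − M_ρ^± φ(y)| ≤ C [φ]_{C^{1,α}(ℝ^d)} |x−y|^{α} (both for M_ρ^+ and for M_ρ^−). -/

import Mathlib

open MeasureTheory Metric Set
open scoped Classical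

noncomputable section

abbrev Ed (d : ℕ) := EuclideanSpace ℝ (Fin d)

/-- `min{|y|^{-d-2s}, ρ^{-d-2s}}`, with the convention that it equals `|y|^{-d-2s}` when `ρ = 0`. -/
def truncKer (d : ℕ) (s ρ : ℝ) (y : Ed d) : ℝ :=
  if ρ = 0 then ‖y‖ ^ (-(d : ℝ) - 2 * s)
  else min (‖y‖ ^ (-(d : ℝ) - 2 * s)) (ρ ^ (-(d : ℝ) - 2 * s))

/-- The kernel class `𝒦_ρ` with ellipticity constants `lam ≤ Lam` and order `2s`. -/
def KernelClass (d : ℕ) (s lam Lam ρ : ℝ) : Set (Ed d → ℝ) :=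
  {K | Measurable K ∧ (∀ y, 0 ≤ K y) ∧
    (∀ y : Ed d, y ≠ 0 → lam * truncKer d s ρ y ≤ K y) ∧
    (∀ r : ℝ, 0 < r →
      ∫⁻ y in ball (0 : Ed d) (2 * r) \ ball 0 r, ENNReal.ofReal (K y) ≤
        ENNReal.ofReal (Lam * r ^ (-(2 * s)))) ∧
    (s = 1 / 2 → ∀ r : ℝ, 0 < r →
      (∫ y in ball (0 : Ed d) (2 * r) \ ball 0 r, K y • y) = (0 : Ed d))}

/-- The increment `δ_y u (x)`, whose form depends on whether `s < 1/2`, `s = 1/2` or `s > 1/2`. -/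
def incr (d : ℕ) (s : ℝ) (u : Ed d → ℝ) (x y : Ed d) : ℝ :=
  if s < 1 / 2 then u (x + y) - u x
  else if s = 1 / 2 then u (x + y) - u x - (if ‖y‖ < 1 then fderiv ℝ u x y else 0)
  else u (x + y) - u x - fderiv ℝ u x y

/-- The linear integro-differential operator `L_K u (x) = ∫ δ_y u(x) K(y) dy`. -/
def opL (d : ℕ) (s : ℝ) (K u : Ed d → ℝ) (x : Ed d) : ℝ :=
  ∫ y, incr d s u x y * K y

/-- Pucci extremal operator `M_ρ^- u(x) = inf_{K ∈ 𝒦_ρ} L_K u (x)`. -/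
def pucciInf (d : ℕ) (s lam Lam ρ : ℝ) (u : Ed d → ℝ) (x : Ed d) : ℝ :=
  sInf ((fun K => opL d s K u x) '' KernelClass d s lam Lam ρ)

/-- Pucci extremal operator `M_ρ^+ u(x) = sup_{K ∈ 𝒦_ρ} L_K u (x)`. -/
def pucciSup (d : ℕ) (s lam Lam ρ : ℝ) (u : Ed d → ℝ) (x : Ed d) : ℝ :=
  sSup ((fun K => opL d s K u x) '' KernelClass d s lam Lam ρ)

/-- Parabolic distance `d((x,t),(y,τ)) = max{|x-y|, |t-τ|^{1/(2s)}}`. -/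
def parDist (d : ℕ) (s : ℝ) (p q : Ed d × ℝ) : ℝ :=
  max ‖p.1 - q.1‖ (|p.2 - q.2| ^ (1 / (2 * s)))

/-- The function `v` that equals the test function `φ` on the test cylinder
`B_ε(x₀) × (t₀-ε, t₀]` and `u` elsewhere. -/
def patchFn (d : ℕ) (u φ : Ed d → ℝ → ℝ) (x₀ : Ed d) (t₀ ε : ℝ) : Ed d → ℝ → ℝ :=
  fun x t => if x ∈ ball x₀ ε ∧ t ∈ Ioc (t₀ - ε) t₀ then φ x t else u x t

/-- `φ` is an admissible (parabolic) test function on the cylinder `B_ε(x₀) × (t₀-ε, t₀]`: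
`C^{1,1}` in space and left-differentiable in time. -/
def IsTestFn (d : ℕ) (φ : Ed d → ℝ → ℝ) (x₀ : Ed d) (t₀ ε : ℝ) : Prop :=
  (∀ t ∈ Ioc (t₀ - ε) t₀, ∀ x ∈ ball x₀ ε, DifferentiableAt ℝ (fun z => φ z t) x) ∧
  (∀ t ∈ Ioc (t₀ - ε) t₀, ∃ L : NNReal,
    LipschitzOnWith L (fun x => fderiv ℝ (fun z => φ z t) x) (ball x₀ ε)) ∧
  (∀ x ∈ ball x₀ ε, ∀ t ∈ Ioc (t₀ - ε) t₀,
    ∃ D : ℝ, HasDerivWithinAt (fun τ => φ x τ) D (Iic t) t)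

/-- Viscosity supersolution of `∂ₜ u + drift·|∇u| − M u ≥ f` in `Ω × I`. -/
def IsViscSuper (d : ℕ) (drift : ℝ) (M : (Ed d → ℝ) → Ed d → ℝ)
    (f : Ed d → ℝ → ℝ) (Ω : Set (Ed d)) (I : Set ℝ) (u : Ed d → ℝ → ℝ) : Prop :=
  LowerSemicontinuousOn (fun p : Ed d × ℝ => u p.1 p.2) (Ω ×ˢ I) ∧
  ∀ x₀ ∈ Ω, ∀ t₀ ∈ I, ∀ ε : ℝ, 0 < ε → ball x₀ ε ⊆ Ω → Ioc (t₀ - ε) t₀ ⊆ I →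
    ∀ φ : Ed d → ℝ → ℝ, IsTestFn d φ x₀ t₀ ε → φ x₀ t₀ = u x₀ t₀ →
      (∀ x ∈ ball x₀ ε, ∀ t ∈ Ioc (t₀ - ε) t₀, φ x t ≤ u x t) →
      f x₀ t₀ ≤
        derivWithin (patchFn d u φ x₀ t₀ ε x₀) (Iic t₀) t₀
          + drift * ‖fderiv ℝ (fun z => patchFn d u φ x₀ t₀ ε z t₀) x₀‖
          - M (fun z => patchFn d u φ x₀ t₀ ε z t₀) x₀

/-- Viscosity subsolution of `∂ₜ u − drift·|∇u| − M u ≤ f` in `Ω × I`. -/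
def IsViscSub (d : ℕ) (drift : ℝ) (M : (Ed d → ℝ) → Ed d → ℝ)
    (f : Ed d → ℝ → ℝ) (Ω : Set (Ed d)) (I : Set ℝ) (u : Ed d → ℝ → ℝ) : Prop :=
  UpperSemicontinuousOn (fun p : Ed d × ℝ => u p.1 p.2) (Ω ×ˢ I) ∧
  ∀ x₀ ∈ Ω, ∀ t₀ ∈ I, ∀ ε : ℝ, 0 < ε → ball x₀ ε ⊆ Ω → Ioc (t₀ - ε) t₀ ⊆ I →
    ∀ φ : Ed d → ℝ → ℝ, IsTestFn d φ x₀ t₀ ε → φ x₀ t₀ = u x₀ t₀ →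
      (∀ x ∈ ball x₀ ε, ∀ t ∈ Ioc (t₀ - ε) t₀, u x t ≤ φ x t) →
      derivWithin (patchFn d u φ x₀ t₀ ε x₀) (Iic t₀) t₀
          - drift * ‖fderiv ℝ (fun z => patchFn d u φ x₀ t₀ ε z t₀) x₀‖
          - M (fun z => patchFn d u φ x₀ t₀ ε z t₀) x₀ ≤ f x₀ t₀

-- helpers
lemma pow_rpow_comm (q : ℝ) (hq : 0 ≤ q) (k : ℕ) (α : ℝ) : (q ^ k) ^ α = (q ^ α) ^ k := by
  rw [← Real.rpow_natCast q k, ← Real.rpow_mul hq, mul_comm, Real.rpow_mul hq,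
    Real.rpow_natCast]

lemma vol_singleton_zero (d : ℕ) (hd : 1 ≤ d) : (volume : Measure (Ed d)) {0} = 0 := by
  haveI : Nontrivial (Ed d) := by
    refine ⟨0, EuclideanSpace.single ⟨0, hd⟩ 1, ?_⟩
    intro h
    have := congrArg (fun v => v ⟨0, hd⟩) h.symm
    simp [EuclideanSpace.single] at this
  exact measure_singleton 0

lemma abs_csInf_sub_csInf {ι : Type*} {S : Set ι} {F G : ι → ℝ} {c : ℝ} (hc : 0 ≤ c)
    (h : ∀ a ∈ S, |F a - G a| ≤ c) (bF : BddBelow (F '' S)) (bG : BddBelow (G '' S)) :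
    |sInf (F '' S) - sInf (G '' S)| ≤ c := by
  rcases S.eq_empty_or_nonempty with rfl | hS
  · simp [hc]
  · have key : ∀ (F G : ι → ℝ), (∀ a ∈ S, |F a - G a| ≤ c) → BddBelow (F '' S) →
        sInf (F '' S) - sInf (G '' S) ≤ c := by
      intro F G h bF
      have h1 : sInf (G '' S) ≥ sInf (F '' S) - c := by
        apply le_csInf (hS.image G)
        rintro b ⟨a, ha, rfl⟩
        have h2 : sInf (F '' S) ≤ F a := csInf_le bF ⟨a, ha, rfl⟩
        have h3 : |F a - G a| ≤ c := h a ha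
        have := abs_le.1 h3
        linarith
      linarith
    have h' : ∀ a ∈ S, |G a - F a| ≤ c := fun a ha => by rw [abs_sub_comm]; exact h a ha
    have := key F G h bF
    have := key G F h' bG
    rw [abs_le]; constructor <;> linarith

lemma abs_csSup_sub_csSup {ι : Type*} {S : Set ι} {F G : ι → ℝ} {c : ℝ} (hc : 0 ≤ c)
    (h : ∀ a ∈ S, |F a - G a| ≤ c) (bF : BddAbove (F '' S)) (bG : BddAbove (G '' S)) :
    |sSup (F '' S) - sSup (G '' S)| ≤ c := by
  rcases S.eq_empty_or_nonempty with rfl | hS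
  · simp [hc]
  · have key : ∀ (F G : ι → ℝ), (∀ a ∈ S, |F a - G a| ≤ c) → BddAbove (G '' S) →
        sSup (F '' S) - sSup (G '' S) ≤ c := by
      intro F G h bG
      have h1 : sSup (F '' S) ≤ sSup (G '' S) + c := by
        apply csSup_le (hS.image F)
        rintro b ⟨a, ha, rfl⟩
        have h2 : G a ≤ sSup (G '' S) := le_csSup bG ⟨a, ha, rfl⟩
        have h3 := abs_le.1 (h a ha)
        linarith
      linarith
    have h' : ∀ a ∈ S, |G a - F a| ≤ c := fun a ha => by rw [abs_sub_comm]; exact h a ha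
    have := key F G h bG
    have := key G F h' bF
    rw [abs_le]; constructor <;> linarith

lemma tsum_min_geom {u w A B θ : ℝ} (hu0 : 0 < u) (hu1 : u < 1) (hw : 1 < w)
    (hA : 0 ≤ A) (hB : 0 ≤ B) (hθ0 : 0 ≤ θ) (hθ1 : θ ≤ 1)
    (huw : u ^ θ * w ^ (1 - θ) = 1) :
    ∑' k : ℕ, min (A * u ^ k) (B * w ^ k) ≤
      ((1 - u)⁻¹ + w / (u * (w - 1))) * (A ^ θ * B ^ (1 - θ)) := by
  have hw0 : (0:ℝ) < w := lt_trans one_pos hw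
  have hRHSfac : 0 ≤ A ^ θ * B ^ (1 - θ) :=
    mul_nonneg (Real.rpow_nonneg hA θ) (Real.rpow_nonneg hB (1 - θ))
  have hcoef : 0 ≤ (1 - u)⁻¹ + w / (u * (w - 1)) := by
    have p1 : 0 ≤ (1 - u)⁻¹ := by
      have : 0 < 1 - u := by linarith
      positivity
    have p2 : 0 ≤ w / (u * (w - 1)) := by
      apply div_nonneg hw0.le
      have : 0 < w - 1 := by linarith
      positivity
    linarith
  rcases eq_or_lt_of_le hB with hB0 | hBpos
  · -- B = 0
    have : ∀ k : ℕ, min (A * u ^ k) (B * w ^ k) = 0 := by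
      intro k
      rw [← hB0]
      simp only [zero_mul]
      exact min_eq_right (by positivity)
    rw [tsum_congr this, tsum_zero]
    exact mul_nonneg hcoef hRHSfac
  · -- B > 0
    have hex : ∃ k : ℕ, A * u ^ k ≤ B * w ^ k := by
      obtain ⟨k, hk⟩ := pow_unbounded_of_one_lt (A / B) hw
      refine ⟨k, ?_⟩
      have h1 : A * u ^ k ≤ A := by
        calc A * u ^ k ≤ A * 1 := by
              apply mul_le_mul_of_nonneg_left _ hA
              exact pow_le_one₀ hu0.le hu1.le
          _ = A := mul_one A
      have h2 : A ≤ B * w ^ k := by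
        rw [div_lt_iff₀ hBpos] at hk
        nlinarith
      linarith
    set N := Nat.find hex with hN
    have hNle : A * u ^ N ≤ B * w ^ N := Nat.find_spec hex
    -- the key comparison: A * u ^ N ≤ A ^ θ * B ^ (1 - θ)
    have hkey : A * u ^ N ≤ A ^ θ * B ^ (1 - θ) := by
      have h1 : A * u ^ N = (A * u ^ N) ^ θ * (A * u ^ N) ^ (1 - θ) := by
        rw [← Real.rpow_add' (by positivity) (by norm_num)]
        simp
      have h2 : (A * u ^ N) ^ (1 - θ) ≤ (B * w ^ N) ^ (1 - θ) :=
        Real.rpow_le_rpow (by positivity) hNle (by linarith)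
      have h3 : (A * u ^ N) ^ θ * (B * w ^ N) ^ (1-θ) = A ^ θ * B ^ (1-θ) := by
        rw [Real.mul_rpow hA (by positivity), Real.mul_rpow hB (by positivity),
          pow_rpow_comm u hu0.le, pow_rpow_comm w hw0.le]
        have hone : (u ^ θ) ^ N * (w ^ (1 - θ)) ^ N = 1 := by rw [← mul_pow, huw, one_pow]
        linear_combination A ^ θ * B ^ (1 - θ) * hone
      calc A * u ^ N = (A * u ^ N) ^ θ * (A * u ^ N) ^ (1 - θ) := h1
        _ ≤ (A * u ^ N) ^ θ * (B * w ^ N) ^ (1 - θ) := by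
            apply mul_le_mul_of_nonneg_left h2 (Real.rpow_nonneg (by positivity) θ)
        _ = A ^ θ * B ^ (1-θ) := h3
    -- majorant g
    set g : ℕ → ℝ := fun k => if k < N then B * w ^ k else A * u ^ k with hg
    have hfg : ∀ k, min (A * u ^ k) (B * w ^ k) ≤ g k := by
      intro k
      by_cases hk : k < N <;> simp [hg, hk, min_le_left, min_le_right]
    have hgsum : Summable g := by
      have : g = fun k => (if k < N then B * w ^ k else 0) + (if k < N then 0 else A * u ^ k) := by
        funext k; by_cases hk : k < N <;> simp [hg, hk]
      rw [this]
      apply Summable.add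
      · apply summable_of_finite_support
        apply Set.Finite.subset (Set.finite_Iio N)
        intro k hk
        simp only [Function.mem_support] at hk
        by_contra hc
        simp only [Set.mem_Iio, not_lt] at hc
        exact hk (by simp [Nat.not_lt.2 hc])
      · apply Summable.of_nonneg_of_le (fun k => by positivity)
          (fun k => ?_) ((summable_geometric_of_lt_one hu0.le hu1).mul_left A)
        by_cases hk : k < N <;> simp [hk] <;> positivity
    have hmin_sum : Summable (fun k : ℕ => min (A * u ^ k) (B * w ^ k)) := by
      apply Summable.of_nonneg_of_le (fun k => le_min (by positivity) (by positivity)) hfg hgsum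
    have h1 : ∑' k : ℕ, min (A * u ^ k) (B * w ^ k) ≤ ∑' k, g k :=
      Summable.tsum_le_tsum hfg hmin_sum hgsum
    -- compute tsum g
    have h2 : ∑' k, g k = (∑ k ∈ Finset.range N, B * w ^ k) + ∑' j : ℕ, A * u ^ (N + j) := by
      rw [← Summable.sum_add_tsum_nat_add (f := g) N hgsum]
      congr 1
      · apply Finset.sum_congr rfl
        intro k hk
        simp [hg, Finset.mem_range.1 hk]
      · apply tsum_congr
        intro j
        simp only [hg]
        rw [if_neg (by omega), Nat.add_comm]
    have h3 : ∑' j : ℕ, A * u ^ (N + j) = A * u ^ N * (1 - u)⁻¹ := by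
      have : ∀ j : ℕ, A * u ^ (N + j) = (A * u ^ N) * u ^ j := by
        intro j; rw [pow_add]; ring
      rw [tsum_congr this, tsum_mul_left, tsum_geometric_of_lt_one hu0.le hu1]
    have hw1 : (0:ℝ) < w - 1 := by linarith
    have h4 : (∑ k ∈ Finset.range N, B * w ^ k) ≤ (w / (u * (w - 1))) * (A ^ θ * B ^ (1-θ)) := by
      rcases Nat.eq_zero_or_pos N with hN0 | hNpos
      · simp only [hN0, Finset.range_zero, Finset.sum_empty]
        have hpos : 0 < u * (w - 1) := by nlinarith
        exact mul_nonneg (div_nonneg hw0.le hpos.le) hRHSfac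
      · have hNsub : ¬ (A * u ^ (N-1) ≤ B * w ^ (N-1)) := Nat.find_min hex (by omega)
        push_neg at hNsub
        have hBN : B * w ^ N ≤ (w / u) * (A * u ^ N) := by
          have e1 : B * w ^ N = w * (B * w ^ (N-1)) := by
            rw [← mul_assoc, mul_comm w B, mul_assoc, ← pow_succ']
            congr 2
            omega
          have e2 : A * u ^ (N-1) = (A * u ^ N) / u := by
            rw [eq_div_iff (ne_of_gt hu0), mul_assoc, ← pow_succ]
            congr 2
            omega
          rw [e1]
          calc w * (B * w ^ (N-1)) ≤ w * (A * u ^ (N-1)) := by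
                apply mul_le_mul_of_nonneg_left (le_of_lt hNsub) hw0.le
            _ = (w / u) * (A * u ^ N) := by rw [e2]; field_simp
        have hgeom : (∑ k ∈ Finset.range N, (w:ℝ) ^ k) = (w ^ N - 1) / (w - 1) :=
          geom_sum_eq (ne_of_gt hw) N
        have heq : (∑ k ∈ Finset.range N, B * w ^ k) = B * ((w ^ N - 1) / (w - 1)) := by
          rw [← Finset.mul_sum, hgeom]
        rw [heq]
        have h6 : B * w ^ N ≤ (w/u) * (A ^ θ * B ^ (1-θ)) :=
          le_trans hBN (mul_le_mul_of_nonneg_left hkey (by positivity))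
        rw [mul_div_assoc', div_le_iff₀ hw1]
        have hrw : (w / (u * (w - 1))) * (A ^ θ * B ^ (1 - θ)) * (w - 1)
            = (w/u) * (A ^ θ * B ^ (1-θ)) := by
          field_simp
        rw [hrw]
        have h5 : B * (w ^ N - 1) ≤ B * w ^ N := by nlinarith [pow_pos hw0 N]
        linarith
    have h5 : A * u ^ N * (1 - u)⁻¹ ≤ (1 - u)⁻¹ * (A ^ θ * B ^ (1-θ)) := by
      rw [mul_comm (A * u ^ N) _]
      exact mul_le_mul_of_nonneg_left hkey (inv_nonneg.2 (by linarith))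
    calc ∑' k : ℕ, min (A * u ^ k) (B * w ^ k) ≤ ∑' k, g k := h1
      _ = (∑ k ∈ Finset.range N, B * w ^ k) + ∑' j : ℕ, A * u ^ (N + j) := h2
      _ = (∑ k ∈ Finset.range N, B * w ^ k) + A * u ^ N * (1 - u)⁻¹ := by rw [h3]
      _ ≤ (w / (u * (w - 1))) * (A ^ θ * B ^ (1-θ)) + (1 - u)⁻¹ * (A ^ θ * B ^ (1-θ)) := by
          linarith
      _ = ((1 - u)⁻¹ + w / (u * (w - 1))) * (A ^ θ * B ^ (1 - θ)) := by ring


/-- dyadic ring -/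
def ringS (d : ℕ) (r : ℝ) : Set (Ed d) := ball (0 : Ed d) (2*r) \ ball 0 r

lemma mem_ringS {d : ℕ} {r : ℝ} {y : Ed d} : y ∈ ringS d r ↔ r ≤ ‖y‖ ∧ ‖y‖ < 2*r := by
  simp only [ringS, mem_diff, mem_ball_zero_iff, not_lt]
  tauto

lemma measurableSet_ringS {d : ℕ} {r : ℝ} : MeasurableSet (ringS d r) :=
  measurableSet_ball.diff measurableSet_ball

lemma incr_half (d : ℕ) (u : Ed d → ℝ) (x y : Ed d) :
    incr d (1/2) u x y = u (x + y) - u x - (if ‖y‖ < 1 then fderiv ℝ u x y else 0) := by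
  rw [incr, if_neg (lt_irrefl _), if_pos rfl]

section kernel

variable {d : ℕ} {lam Lam ρ : ℝ} {K : Ed d → ℝ}

lemma ring_lintegral_le (hK : K ∈ KernelClass d (1/2) lam Lam ρ) {r : ℝ} (hr : 0 < r) :
    ∫⁻ y in ringS d r, ENNReal.ofReal (K y) ≤ ENNReal.ofReal (Lam / r) := by
  have h := hK.2.2.2.1 r hr
  have e : -(2 * ((1:ℝ) / 2)) = (-1 : ℝ) := by norm_num
  rw [e, Real.rpow_neg_one, ← div_eq_mul_inv] at h
  exact h

lemma K_integrableOn_ring (hK : K ∈ KernelClass d (1/2) lam Lam ρ) {r : ℝ} (hr : 0 < r) :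
    IntegrableOn K (ringS d r) := by
  refine ⟨hK.1.aestronglyMeasurable.restrict, ?_⟩
  rw [hasFiniteIntegral_iff_norm]
  have : ∀ y, ENNReal.ofReal ‖K y‖ = ENNReal.ofReal (K y) := by
    intro y; rw [Real.norm_eq_abs, abs_of_nonneg (hK.2.1 y)]
  calc ∫⁻ y in ringS d r, ENNReal.ofReal ‖K y‖
      = ∫⁻ y in ringS d r, ENNReal.ofReal (K y) := by
        apply lintegral_congr; intro y; exact this y
    _ ≤ ENNReal.ofReal (Lam / r) := ring_lintegral_le hK hr
    _ < ⊤ := ENNReal.ofReal_lt_top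

lemma ring_K_integral_le (hLam : 0 ≤ Lam) (hK : K ∈ KernelClass d (1/2) lam Lam ρ)
    {r : ℝ} (hr : 0 < r) : ∫ y in ringS d r, K y ≤ Lam / r := by
  have h0 : 0 ≤ᵐ[volume.restrict (ringS d r)] K := ae_of_all _ (fun y => hK.2.1 y)
  rw [integral_eq_lintegral_of_nonneg_ae h0 hK.1.aestronglyMeasurable.restrict]
  apply ENNReal.toReal_le_of_le_ofReal
  · positivity
  · exact ring_lintegral_le hK hr

lemma ring_prod_bound (hLam : 0 ≤ Lam) (hK : K ∈ KernelClass d (1/2) lam Lam ρ) {r c : ℝ} (hr : 0 < r)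
    (hc : 0 ≤ c) {f : Ed d → ℝ} (hf : AEStronglyMeasurable f (volume.restrict (ringS d r)))
    (hfc : ∀ y ∈ ringS d r, |f y| ≤ c) :
    IntegrableOn (fun y => f y * K y) (ringS d r) ∧
      |∫ y in ringS d r, f y * K y| ≤ c * (Lam / r) := by
  have hKint := K_integrableOn_ring hK hr
  have hcK : IntegrableOn (fun y => c * K y) (ringS d r) := hKint.const_mul c
  have haebd : ∀ᵐ y ∂(volume.restrict (ringS d r)), ‖f y * K y‖ ≤ c * K y := by
    filter_upwards [ae_restrict_mem (measurableSet_ringS)] with y hy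
    rw [Real.norm_eq_abs, abs_mul, abs_of_nonneg (hK.2.1 y)]
    exact mul_le_mul_of_nonneg_right (hfc y hy) (hK.2.1 y)
  have hint : IntegrableOn (fun y => f y * K y) (ringS d r) :=
    Integrable.mono' hcK (hf.mul hK.1.aestronglyMeasurable.restrict) haebd
  refine ⟨hint, ?_⟩
  calc |∫ y in ringS d r, f y * K y| ≤ ∫ y in ringS d r, |f y * K y| := by
        rw [← Real.norm_eq_abs (∫ y in ringS d r, f y * K y)]
        refine (norm_integral_le_integral_norm _).trans (le_of_eq ?_)
        simp only [Real.norm_eq_abs]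
    _ ≤ ∫ y in ringS d r, c * K y := by
        apply setIntegral_mono_on hint.abs hcK measurableSet_ringS
        intro y hy
        rw [abs_mul, abs_of_nonneg (hK.2.1 y)]
        exact mul_le_mul_of_nonneg_right (hfc y hy) (hK.2.1 y)
    _ = c * ∫ y in ringS d r, K y := integral_const_mul c K
    _ ≤ c * (Lam / r) := mul_le_mul_of_nonneg_left (ring_K_integral_le hLam hK hr) hc

lemma ring_cancel (hK : K ∈ KernelClass d (1/2) lam Lam ρ) {r : ℝ} (hr : 0 < r)
    (b : Ed d →L[ℝ] ℝ) : ∫ y in ringS d r, b y * K y = 0 := by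
  have hzero : (∫ y in ringS d r, K y • y) = (0 : Ed d) := hK.2.2.2.2 rfl r hr
  have hint : Integrable (fun y => K y • y) (volume.restrict (ringS d r)) := by
    apply Integrable.mono' ((K_integrableOn_ring hK hr).const_mul (2*r))
    · exact (hK.1.smul measurable_id).aestronglyMeasurable.restrict
    · filter_upwards [ae_restrict_mem (measurableSet_ringS)] with y hy
      rw [norm_smul, Real.norm_eq_abs, abs_of_nonneg (hK.2.1 y)]
      have h2 : ‖y‖ ≤ 2*r := le_of_lt (mem_ringS.1 hy).2
      calc K y * ‖y‖ ≤ K y * (2*r) := mul_le_mul_of_nonneg_left h2 (hK.2.1 y)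
        _ = 2*r * K y := mul_comm _ _
  calc ∫ y in ringS d r, b y * K y = ∫ y in ringS d r, b (K y • y) := by
        apply setIntegral_congr_fun measurableSet_ringS
        intro y _
        show b y * K y = b (K y • y)
        rw [b.map_smul, smul_eq_mul, mul_comm]
    _ = b (∫ y in ringS d r, K y • y) := b.integral_comp_comm hint
    _ = 0 := by rw [hzero]; exact b.map_zero

end kernel

section phi

variable {d : ℕ} {φ : Ed d → ℝ} {H α : ℝ}

lemma seg_norm_le {z y u : Ed d} (hu : u ∈ segment ℝ z (z + y)) : ‖u - z‖ ≤ ‖y‖ := by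
  obtain ⟨a, b, ha, hb, hab, rfl⟩ := hu
  have e : a • z + b • (z + y) - z = b • y := by
    have : a • z + b • (z + y) - z = (a + b) • z + b • y - z := by
      rw [smul_add, add_smul]; abel
    rw [this, hab, one_smul]; abel
  rw [e, norm_smul, Real.norm_eq_abs, abs_of_nonneg hb]
  have hb1 : b ≤ 1 := by linarith
  calc b * ‖y‖ ≤ 1 * ‖y‖ := mul_le_mul_of_nonneg_right hb1 (norm_nonneg y)
    _ = ‖y‖ := one_mul _

lemma taylor_bound (hφ : ContDiff ℝ 1 φ) (hH0 : 0 ≤ H) (hα : 0 < α)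
    (hH : ∀ x y : Ed d, ‖fderiv ℝ φ x - fderiv ℝ φ y‖ ≤ H * ‖x - y‖ ^ α) (z y : Ed d) :
    |φ (z + y) - φ z - fderiv ℝ φ z y| ≤ (H * ‖y‖ ^ α) * ‖y‖ := by
  set b := fderiv ℝ φ z with hb
  set F : Ed d → ℝ := fun u => φ u - b u with hF
  have hder : ∀ u ∈ segment ℝ z (z + y),
      HasFDerivWithinAt F (fderiv ℝ φ u - b) (segment ℝ z (z + y)) u := by
    intro u _
    exact ((hφ.differentiable one_ne_zero u).hasFDerivAt.sub b.hasFDerivAt).hasFDerivWithinAt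
  have hbound : ∀ u ∈ segment ℝ z (z + y), ‖fderiv ℝ φ u - b‖ ≤ H * ‖y‖ ^ α := by
    intro u hu
    refine (hH u z).trans ?_
    apply mul_le_mul_of_nonneg_left _ hH0
    exact Real.rpow_le_rpow (norm_nonneg _) (seg_norm_le hu) hα.le
  have := Convex.norm_image_sub_le_of_norm_hasFDerivWithin_le hder hbound
    (convex_segment _ _) (left_mem_segment ℝ z (z + y)) (right_mem_segment ℝ z (z + y))
  rw [add_sub_cancel_left] at this
  have eF : F (z + y) - F z = φ (z + y) - φ z - b y := by
    simp only [hF]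
    rw [b.map_add]
    ring
  rw [eF] at this
  exact this

lemma shift_bound (hφ : ContDiff ℝ 1 φ) (hH0 : 0 ≤ H) (hα : 0 < α)
    (hH : ∀ x y : Ed d, ‖fderiv ℝ φ x - fderiv ℝ φ y‖ ≤ H * ‖x - y‖ ^ α) (z v y : Ed d) :
    |(φ (z + y) - φ z) - (φ (z + v + y) - φ (z + v))| ≤ (H * ‖y‖ ^ α) * ‖v‖ := by
  set G : Ed d → ℝ := fun u => φ (u + y) - φ u with hG
  have hder : ∀ u ∈ segment ℝ z (z + v),
      HasFDerivWithinAt G (fderiv ℝ φ (u + y) - fderiv ℝ φ u) (segment ℝ z (z + v)) u := by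
    intro u _
    have h1 := (hφ.differentiable one_ne_zero (u + y)).hasFDerivAt
    have h2 : HasFDerivAt (fun w : Ed d => w + y) (ContinuousLinearMap.id ℝ (Ed d)) u :=
      (hasFDerivAt_id u).add_const y
    have h3 : HasFDerivAt (fun w : Ed d => φ (w + y))
        ((fderiv ℝ φ (u + y)).comp (ContinuousLinearMap.id ℝ (Ed d))) u := h1.comp u h2
    rw [ContinuousLinearMap.comp_id] at h3
    exact (h3.sub (hφ.differentiable one_ne_zero u).hasFDerivAt).hasFDerivWithinAt
  have hbound : ∀ u ∈ segment ℝ z (z + v), ‖fderiv ℝ φ (u + y) - fderiv ℝ φ u‖ ≤ H * ‖y‖ ^ α := by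
    intro u _
    refine (hH (u + y) u).trans (le_of_eq ?_)
    rw [add_sub_cancel_left]
  have := Convex.norm_image_sub_le_of_norm_hasFDerivWithin_le hder hbound
    (convex_segment _ _) (left_mem_segment ℝ z (z + v)) (right_mem_segment ℝ z (z + v))
  rw [add_sub_cancel_left] at this
  have eG : G (z + v) - G z = (φ (z + v + y) - φ (z + v)) - (φ (z + y) - φ z) := by
    simp only [hG]
  rw [eG] at this
  rw [abs_sub_comm]
  exact this

end phi

section region

variable {d : ℕ} {lam Lam ρ : ℝ} {K : Ed d → ℝ}

lemma inner_tiling (d : ℕ) :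
    (ball (0 : Ed d) 1 \ {0}) = ⋃ k : ℕ, ringS d ((1/2)^(k+1)) := by
  ext y
  simp only [mem_diff, mem_ball_zero_iff, mem_singleton_iff, mem_iUnion, mem_ringS]
  constructor
  · rintro ⟨h1, h0⟩
    have hy0 : 0 < ‖y‖ := norm_pos_iff.2 h0
    have hex : ∃ n : ℕ, ((1:ℝ)/2)^(n+1) ≤ ‖y‖ := by
      obtain ⟨n, hn⟩ := exists_pow_lt_of_lt_one hy0 (by norm_num : (1:ℝ)/2 < 1)
      refine ⟨n, ?_⟩
      have : ((1:ℝ)/2)^(n+1) ≤ (1/2)^n :=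
        pow_le_pow_of_le_one (by norm_num) (by norm_num) (by omega)
      linarith
    set N := Nat.find hex with hN
    refine ⟨N, Nat.find_spec hex, ?_⟩
    have h2 : ‖y‖ < ((1:ℝ)/2)^N := by
      rcases Nat.eq_zero_or_pos N with h | h
      · rw [h]; simpa using h1
      · have := Nat.find_min hex (show N - 1 < N by omega)
        push_neg at this
        have e : N - 1 + 1 = N := by omega
        rwa [e] at this
    calc ‖y‖ < ((1:ℝ)/2)^N := h2
      _ = 2 * (1/2)^(N+1) := by rw [pow_succ]; ring
  · rintro ⟨k, h1, h2⟩
    constructor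
    · calc ‖y‖ < 2 * ((1:ℝ)/2)^(k+1) := h2
        _ = ((1:ℝ)/2)^k := by rw [pow_succ]; ring
        _ ≤ 1 := pow_le_one₀ (by norm_num) (by norm_num)
    · intro h0
      rw [h0, norm_zero] at h1
      have : (0:ℝ) < (1/2)^(k+1) := by positivity
      linarith

lemma outer_tiling (d : ℕ) :
    ((ball (0 : Ed d) 1)ᶜ : Set (Ed d)) = ⋃ k : ℕ, ringS d (2^k) := by
  ext y
  simp only [mem_compl_iff, mem_ball_zero_iff, not_lt, mem_iUnion, mem_ringS]
  constructor
  · intro h1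
    have hex : ∃ n : ℕ, ‖y‖ < 2^(n+1) := by
      obtain ⟨n, hn⟩ := pow_unbounded_of_one_lt ‖y‖ (by norm_num : (1:ℝ) < 2)
      exact ⟨n, lt_of_lt_of_le hn (by apply pow_le_pow_right₀ (by norm_num); omega)⟩
    set N := Nat.find hex with hN
    have hspec : ‖y‖ < 2^(N+1) := Nat.find_spec hex
    refine ⟨N, ?_, by rw [show (2:ℝ) * 2^N = 2^(N+1) by rw [pow_succ]; ring]; exact hspec⟩
    rcases Nat.eq_zero_or_pos N with h | h
    · rw [h]; simpa using h1
    · have := Nat.find_min hex (show N - 1 < N by omega)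
      push_neg at this
      have e : N - 1 + 1 = N := by omega
      rwa [e] at this
  · rintro ⟨k, h1, _⟩
    calc (1:ℝ) ≤ 2^k := one_le_pow₀ (by norm_num)
      _ ≤ ‖y‖ := h1

lemma ring_disj_of_strictAnti {r : ℕ → ℝ} (hr : ∀ k, 0 < r k)
    (hstep : ∀ k j, k < j → 2 * r j ≤ r k) :
    Pairwise (Function.onFun Disjoint fun k => ringS d (r k)) := by
  have key : ∀ k j, k < j → Disjoint (ringS d (r k)) (ringS d (r j)) := by
    intro k j hkj
    rw [Set.disjoint_left]
    intro y hyk hyj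
    have h1 := (mem_ringS.1 hyk).1
    have h2 := (mem_ringS.1 hyj).2
    have := hstep k j hkj
    linarith
  intro k j hkj
  rcases lt_or_gt_of_ne hkj with h | h
  · exact key k j h
  · exact (key j k h).symm

lemma inner_disj (d : ℕ) :
    Pairwise (Function.onFun Disjoint fun k : ℕ => ringS d (((1:ℝ)/2)^(k+1))) := by
  apply ring_disj_of_strictAnti (fun k => by positivity)
  intro k j hkj
  calc 2 * ((1:ℝ)/2)^(j+1) = (1/2)^j := by rw [pow_succ]; ring
    _ ≤ (1/2)^(k+1) := pow_le_pow_of_le_one (by norm_num) (by norm_num) (by omega)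

lemma outer_disj (d : ℕ) :
    Pairwise (Function.onFun Disjoint fun k : ℕ => ringS d ((2:ℝ)^k)) := by
  have key : ∀ k j : ℕ, k < j → Disjoint (ringS d ((2:ℝ)^k)) (ringS d ((2:ℝ)^j)) := by
    intro k j hkj
    rw [Set.disjoint_left]
    intro y hyk hyj
    have h1 := (mem_ringS.1 hyk).2
    have h2 := (mem_ringS.1 hyj).1
    have : (2:ℝ) * 2^k ≤ 2^j := by
      rw [show (2:ℝ) * 2^k = 2^(k+1) by rw [pow_succ]; ring]
      apply pow_le_pow_right₀ (by norm_num)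
      omega
    linarith
  intro k j hkj
  rcases lt_or_gt_of_ne hkj with h | h
  · exact key k j h
  · exact (key j k h).symm

lemma ring_lint_prod (hLam : 0 ≤ Lam) (hK : K ∈ KernelClass d (1/2) lam Lam ρ) {r c : ℝ}
    (hr : 0 < r) (hc : 0 ≤ c) {F : Ed d → ℝ} (hFc : ∀ y ∈ ringS d r, |F y| ≤ c) :
    ∫⁻ y in ringS d r, ENNReal.ofReal ‖F y * K y‖ ≤ ENNReal.ofReal (c * (Lam / r)) := by
  have step1 : ∫⁻ y in ringS d r, ENNReal.ofReal ‖F y * K y‖ ≤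
      ∫⁻ y in ringS d r, ENNReal.ofReal c * ENNReal.ofReal (K y) := by
    apply setLIntegral_mono_ae
    · exact (ENNReal.measurable_ofReal.comp hK.1).const_mul _ |>.aemeasurable
    · apply ae_of_all
      intro y hy
      rw [← ENNReal.ofReal_mul hc]
      apply ENNReal.ofReal_le_ofReal
      rw [Real.norm_eq_abs, abs_mul, abs_of_nonneg (hK.2.1 y)]
      exact mul_le_mul_of_nonneg_right (hFc y hy) (hK.2.1 y)
  have step2 : ∫⁻ y in ringS d r, ENNReal.ofReal c * ENNReal.ofReal (K y) =
      ENNReal.ofReal c * ∫⁻ y in ringS d r, ENNReal.ofReal (K y) :=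
    lintegral_const_mul _ (ENNReal.measurable_ofReal.comp hK.1)
  calc ∫⁻ y in ringS d r, ENNReal.ofReal ‖F y * K y‖
      ≤ ENNReal.ofReal c * ∫⁻ y in ringS d r, ENNReal.ofReal (K y) := by rw [← step2]; exact step1
    _ ≤ ENNReal.ofReal c * ENNReal.ofReal (Lam / r) :=
        mul_le_mul_right (ring_lintegral_le hK hr) _
    _ = ENNReal.ofReal (c * (Lam / r)) := (ENNReal.ofReal_mul hc).symm

lemma region_integrableOn (hLam : 0 ≤ Lam) (hK : K ∈ KernelClass d (1/2) lam Lam ρ)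
    {F : Ed d → ℝ} (hFmeas : Measurable F) {r : ℕ → ℝ} (hr : ∀ k, 0 < r k)
    {c : ℕ → ℝ} (hc : ∀ k, 0 ≤ c k) (hFc : ∀ k, ∀ y ∈ ringS d (r k), |F y| ≤ c k)
    (hcs : Summable (fun k => c k * (Lam / r k))) :
    IntegrableOn (fun y => F y * K y) (⋃ k, ringS d (r k)) := by
  refine ⟨((hFmeas.mul hK.1).aestronglyMeasurable).restrict, ?_⟩
  rw [hasFiniteIntegral_iff_norm]
  calc ∫⁻ y in ⋃ k, ringS d (r k), ENNReal.ofReal ‖F y * K y‖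
      ≤ ∑' k, ∫⁻ y in ringS d (r k), ENNReal.ofReal ‖F y * K y‖ :=
        lintegral_iUnion_le _ _
    _ ≤ ∑' k, ENNReal.ofReal (c k * (Lam / r k)) := by
        apply ENNReal.tsum_le_tsum
        intro k
        exact ring_lint_prod hLam hK (hr k) (hc k) (hFc k)
    _ = ENNReal.ofReal (∑' k, c k * (Lam / r k)) := by
        rw [ENNReal.ofReal_tsum_of_nonneg (fun k => mul_nonneg (hc k)
          (div_nonneg hLam (hr k).le)) hcs]
    _ < ⊤ := ENNReal.ofReal_lt_top

lemma region_sum_bound {F : Ed d → ℝ} {r : ℕ → ℝ}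
    (hdisj : Pairwise (Function.onFun Disjoint fun k => ringS d (r k)))
    (hFK : IntegrableOn (fun y => F y * K y) (⋃ k, ringS d (r k)))
    {t : ℕ → ℝ} (ht : ∀ k, |∫ y in ringS d (r k), F y * K y| ≤ t k) (hts : Summable t) :
    |∫ y in ⋃ k, ringS d (r k), F y * K y| ≤ ∑' k, t k := by
  rw [integral_iUnion (fun _ => measurableSet_ringS) hdisj hFK]
  have hsum : Summable (fun k => ∫ y in ringS d (r k), F y * K y) :=
    (hasSum_integral_iUnion (fun _ => measurableSet_ringS) hdisj hFK).summable
  have habs : Summable (fun k => |∫ y in ringS d (r k), F y * K y|) :=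
    Summable.of_nonneg_of_le (fun k => abs_nonneg _) ht hts
  calc |∑' k, ∫ y in ringS d (r k), F y * K y| ≤ ∑' k, |∫ y in ringS d (r k), F y * K y| := by
        rw [← Real.norm_eq_abs]
        refine (norm_tsum_le_tsum_norm ?_).trans (le_of_eq (tsum_congr fun k => ?_))
        · simpa [Real.norm_eq_abs] using habs
        · rw [Real.norm_eq_abs]
    _ ≤ ∑' k, t k := Summable.tsum_le_tsum ht habs hts

end region

section main

variable {d : ℕ} {lam Lam ρ : ℝ} {K : Ed d → ℝ} {φ : Ed d → ℝ} {H α Cb : ℝ}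

lemma half_pow_mul_two_pow (k : ℕ) : ((1:ℝ)/2)^k * 2^(k+1) = 2 := by
  rw [pow_succ, ← mul_assoc, ← mul_pow]
  norm_num

lemma lam_div_rin (Lam : ℝ) (k : ℕ) : Lam / (((1:ℝ)/2)^(k+1)) = Lam * 2^(k+1) := by
  rw [div_eq_mul_inv]
  congr 1
  rw [one_div, inv_pow, inv_inv]

lemma incr_meas (hφ : ContDiff ℝ 1 φ) (x : Ed d) :
    Measurable (fun y => incr d (1/2) φ x y) := by
  have e : (fun y => incr d (1/2) φ x y) =
      fun y => (φ (x + y) - φ x) - (if ‖y‖ < 1 then fderiv ℝ φ x y else 0) := by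
    funext y; rw [incr_half]
  rw [e]
  apply Measurable.sub
  · exact ((hφ.continuous.comp (continuous_const.add continuous_id)).measurable).sub
      measurable_const
  · exact Measurable.ite (measurableSet_lt continuous_norm.measurable measurable_const)
      (fderiv ℝ φ x).continuous.measurable measurable_const

lemma incr_inner_bound (hφ : ContDiff ℝ 1 φ) (hH0 : 0 ≤ H) (hα : 0 < α)
    (hH : ∀ x y : Ed d, ‖fderiv ℝ φ x - fderiv ℝ φ y‖ ≤ H * ‖x - y‖ ^ α)
    (x y : Ed d) (hy : ‖y‖ < 1) :
    |incr d (1/2) φ x y| ≤ (H * ‖y‖ ^ α) * ‖y‖ := by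
  rw [incr_half, if_pos hy]
  exact taylor_bound hφ hH0 hα hH x y

lemma incr_outer_bound (hCb : ∀ z, |φ z| ≤ Cb) (x y : Ed d) (hy : ¬ (‖y‖ < 1)) :
    |incr d (1/2) φ x y| ≤ 2 * Cb := by
  rw [incr_half, if_neg hy, sub_zero]
  calc |φ (x + y) - φ x| ≤ |φ (x + y)| + |φ x| := abs_sub _ _
    _ ≤ Cb + Cb := add_le_add (hCb _) (hCb _)
    _ = 2 * Cb := by ring

lemma summable_inner_geom (hLam : 0 < Lam) (hα : 0 < α) (hα1 : α < 1) (hH0 : 0 ≤ H) :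
    Summable (fun k : ℕ => ((H * (((1:ℝ)/2)^k) ^ α) * ((1/2)^k)) * (Lam / (((1:ℝ)/2)^(k+1))))
    ∧ ∑' k : ℕ, ((H * (((1:ℝ)/2)^k) ^ α) * ((1/2)^k)) * (Lam / (((1:ℝ)/2)^(k+1)))
      = 2 * Lam * H * (1 - ((1:ℝ)/2)^α)⁻¹ := by
  have hu0 : (0:ℝ) < ((1:ℝ)/2)^α := Real.rpow_pos_of_pos (by norm_num) α
  have hu1 : ((1:ℝ)/2)^α < 1 := Real.rpow_lt_one (by norm_num) (by norm_num) hα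
  have he : ∀ k : ℕ, ((H * (((1:ℝ)/2)^k) ^ α) * ((1/2)^k)) * (Lam / (((1:ℝ)/2)^(k+1)))
      = (2 * Lam * H) * (((1:ℝ)/2)^α)^k := by
    intro k
    rw [lam_div_rin, pow_rpow_comm _ (by norm_num)]
    have h2 : ((1:ℝ)/2)^k * 2^(k+1) = 2 := half_pow_mul_two_pow k
    calc H * (((1:ℝ)/2)^α)^k * ((1/2)^k) * (Lam * 2^(k+1))
        = H * (((1:ℝ)/2)^α)^k * Lam * (((1:ℝ)/2)^k * 2^(k+1)) := by ring
      _ = (2 * Lam * H) * (((1:ℝ)/2)^α)^k := by rw [h2]; ring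
  constructor
  · exact Summable.congr ((summable_geometric_of_lt_one hu0.le hu1).mul_left (2*Lam*H))
      (fun k => (he k).symm)
  · rw [tsum_congr he, tsum_mul_left, tsum_geometric_of_lt_one hu0.le hu1]

lemma summable_outer_const (hLam : 0 < Lam) {c : ℝ} :
    Summable (fun k : ℕ => c * (Lam / ((2:ℝ)^k)))
    ∧ ∑' k : ℕ, c * (Lam / ((2:ℝ)^k)) = c * Lam * 2 := by
  have he : ∀ k : ℕ, c * (Lam / ((2:ℝ)^k)) = (c * Lam) * ((1:ℝ)/2)^k := by
    intro k
    rw [div_eq_mul_inv, one_div, inv_pow]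
    ring
  constructor
  · exact Summable.congr ((summable_geometric_of_lt_one (by norm_num) (by norm_num :
      (1:ℝ)/2 < 1)).mul_left (c * Lam)) (fun k => (he k).symm)
  · rw [tsum_congr he, tsum_mul_left, tsum_geometric_of_lt_one (by norm_num)
      (by norm_num : (1:ℝ)/2 < 1)]
    norm_num

lemma opL_int_bound (hd : 1 ≤ d) (hLam : 0 < Lam) (hα : 0 < α) (hα1 : α < 1)
    (hφ : ContDiff ℝ 1 φ) (hCb : ∀ z, |φ z| ≤ Cb) (hH0 : 0 ≤ H)
    (hH : ∀ x y : Ed d, ‖fderiv ℝ φ x - fderiv ℝ φ y‖ ≤ H * ‖x - y‖ ^ α)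
    (hK : K ∈ KernelClass d (1/2) lam Lam ρ) (x : Ed d) :
    Integrable (fun y => incr d (1/2) φ x y * K y) ∧
      |opL d (1/2) K φ x| ≤ 2 * Lam * H * (1 - ((1:ℝ)/2)^α)⁻¹ + (2 * Cb) * Lam * 2 := by
  have hCb0 : 0 ≤ Cb := le_trans (abs_nonneg _) (hCb 0)
  set rin : ℕ → ℝ := fun k => ((1:ℝ)/2)^(k+1) with hrin
  set rout : ℕ → ℝ := fun k => (2:ℝ)^k with hrout
  have hrin_pos : ∀ k, 0 < rin k := fun k => by positivity
  have hrout_pos : ∀ k, 0 < rout k := fun k => by positivity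
  set cin : ℕ → ℝ := fun k => (H * (((1:ℝ)/2)^k) ^ α) * ((1/2)^k) with hcin
  have hcin0 : ∀ k, 0 ≤ cin k := fun k => by positivity
  -- pointwise bounds on rings
  have hinner_pt : ∀ k : ℕ, ∀ y ∈ ringS d (rin k), |incr d (1/2) φ x y| ≤ cin k := by
    intro k y hy
    obtain ⟨h1, h2⟩ := mem_ringS.1 hy
    have h2' : ‖y‖ < ((1:ℝ)/2)^k := by
      calc ‖y‖ < 2 * rin k := h2
        _ = ((1:ℝ)/2)^k := by simp only [hrin]; rw [pow_succ]; ring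
    have hy1 : ‖y‖ < 1 := lt_of_lt_of_le h2' (pow_le_one₀ (by norm_num) (by norm_num))
    calc |incr d (1/2) φ x y| ≤ (H * ‖y‖ ^ α) * ‖y‖ := incr_inner_bound hφ hH0 hα hH x y hy1
      _ ≤ cin k := by
          rw [hcin]
          apply mul_le_mul _ h2'.le (norm_nonneg y) (by positivity)
          apply mul_le_mul_of_nonneg_left _ hH0
          exact Real.rpow_le_rpow (norm_nonneg _) h2'.le hα.le
  have houter_pt : ∀ k : ℕ, ∀ y ∈ ringS d (rout k), |incr d (1/2) φ x y| ≤ 2 * Cb := by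
    intro k y hy
    obtain ⟨h1, _⟩ := mem_ringS.1 hy
    have hy1 : ¬ (‖y‖ < 1) := by
      push_neg
      calc (1:ℝ) ≤ 2^k := one_le_pow₀ (by norm_num)
        _ ≤ ‖y‖ := h1
    exact incr_outer_bound hCb x y hy1
  have hsin := summable_inner_geom hLam hα hα1 hH0 (H := H)
  have hsout := summable_outer_const hLam (c := 2 * Cb)
  -- integrability on the three pieces
  have hint_inner : IntegrableOn (fun y => incr d (1/2) φ x y * K y) (⋃ k, ringS d (rin k)) :=
    region_integrableOn hLam.le hK (incr_meas hφ x) hrin_pos hcin0 hinner_pt hsin.1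
  have hint_outer : IntegrableOn (fun y => incr d (1/2) φ x y * K y) (⋃ k, ringS d (rout k)) :=
    region_integrableOn hLam.le hK (incr_meas hφ x) hrout_pos (fun k => by positivity)
      houter_pt hsout.1
  have hball_ae : (ball (0:Ed d) 1 : Set (Ed d)) =ᵐ[volume]
      (ball (0:Ed d) 1 \ ({0} : Set (Ed d))) := by
    refine (MeasureTheory.diff_ae_eq_self.2 ?_).symm
    exact le_antisymm (le_trans (measure_mono Set.inter_subset_right)
      (le_of_eq (vol_singleton_zero d hd))) zero_le
  have hint_ball : IntegrableOn (fun y => incr d (1/2) φ x y * K y) (ball (0:Ed d) 1) := by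
    rw [IntegrableOn, Measure.restrict_congr_set hball_ae]
    have h2 : IntegrableOn (fun y => incr d (1/2) φ x y * K y) (ball (0:Ed d) 1 \ ({0} : Set (Ed d))) := by
      rw [inner_tiling d]; exact hint_inner
    exact h2
  have hint_co : IntegrableOn (fun y => incr d (1/2) φ x y * K y) ((ball (0:Ed d) 1)ᶜ) := by
    rw [IntegrableOn, outer_tiling d]
    exact hint_outer
  have hint : Integrable (fun y => incr d (1/2) φ x y * K y) := by
    rw [← integrableOn_univ, ← union_compl_self (ball (0:Ed d) 1)]
    exact hint_ball.union hint_co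
  refine ⟨hint, ?_⟩
  -- the bound
  have hsplit : opL d (1/2) K φ x = (∫ y in ball (0:Ed d) 1, incr d (1/2) φ x y * K y)
      + ∫ y in (ball (0:Ed d) 1)ᶜ, incr d (1/2) φ x y * K y := by
    rw [opL, ← integral_add_compl measurableSet_ball hint]
  have hb_in : |∫ y in ball (0:Ed d) 1, incr d (1/2) φ x y * K y|
      ≤ ∑' k, cin k * (Lam / rin k) := by
    rw [show (∫ y in ball (0:Ed d) 1, incr d (1/2) φ x y * K y)
        = ∫ y in ball (0:Ed d) 1 \ ({0} : Set (Ed d)), incr d (1/2) φ x y * K y from by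
      exact congrArg (fun μ => ∫ y, incr d (1/2) φ x y * K y ∂μ) (Measure.restrict_congr_set hball_ae)]
    rw [inner_tiling d] at *
    apply region_sum_bound (inner_disj d) hint_inner _ hsin.1
    intro k
    exact (ring_prod_bound hLam.le hK (hrin_pos k) (hcin0 k)
      ((incr_meas hφ x).aestronglyMeasurable.restrict) (hinner_pt k)).2
  have hb_out : |∫ y in (ball (0:Ed d) 1)ᶜ, incr d (1/2) φ x y * K y|
      ≤ ∑' k, (2 * Cb) * (Lam / rout k) := by
    rw [outer_tiling d]
    apply region_sum_bound (outer_disj d) hint_outer _ hsout.1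
    intro k
    exact (ring_prod_bound hLam.le hK (hrout_pos k) (by positivity)
      ((incr_meas hφ x).aestronglyMeasurable.restrict) (houter_pt k)).2
  calc |opL d (1/2) K φ x| ≤ |∫ y in ball (0:Ed d) 1, incr d (1/2) φ x y * K y|
        + |∫ y in (ball (0:Ed d) 1)ᶜ, incr d (1/2) φ x y * K y| := by
        rw [hsplit]; exact abs_add_le _ _
    _ ≤ (∑' k, cin k * (Lam / rin k)) + ∑' k, (2 * Cb) * (Lam / rout k) :=
        add_le_add hb_in hb_out
    _ = 2 * Lam * H * (1 - ((1:ℝ)/2)^α)⁻¹ + (2 * Cb) * Lam * 2 := by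
        rw [hsin.2, hsout.2]


lemma E_meas (hφ : ContDiff ℝ 1 φ) (x v : Ed d) :
    Measurable (fun y : Ed d => (φ (x + y) - φ x) - (φ (x + v + y) - φ (x + v))) := by
  have h1 : Measurable (fun y : Ed d => φ (x + y)) :=
    (hφ.continuous.comp (continuous_const.add continuous_id)).measurable
  have h2 : Measurable (fun y : Ed d => φ (x + v + y)) :=
    (hφ.continuous.comp (continuous_const.add continuous_id)).measurable
  exact (h1.sub measurable_const).sub (h2.sub measurable_const)

lemma ring_E_est (hLam : 0 < Lam) (hα : 0 < α)
    (hφ : ContDiff ℝ 1 φ) (hH0 : 0 ≤ H)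
    (hH : ∀ x y : Ed d, ‖fderiv ℝ φ x - fderiv ℝ φ y‖ ≤ H * ‖x - y‖ ^ α)
    (hK : K ∈ KernelClass d (1/2) lam Lam ρ) (x v : Ed d) {r : ℝ} (hr : 0 < r) :
    IntegrableOn (fun y => ((φ (x + y) - φ x) - (φ (x + v + y) - φ (x + v))) * K y)
        (ringS d r) ∧
    |∫ y in ringS d r, ((φ (x + y) - φ x) - (φ (x + v + y) - φ (x + v))) * K y| ≤
      min ((2 * H * (2*r)^α * (2*r)) * (Lam/r)) ((H * (2*r)^α * ‖v‖) * (Lam/r)) := by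
  have h2r : (0:ℝ) < 2*r := by linarith
  have h2ra : (0:ℝ) ≤ (2*r)^α := Real.rpow_nonneg h2r.le α
  set E : Ed d → ℝ := fun y => (φ (x + y) - φ x) - (φ (x + v + y) - φ (x + v)) with hE
  have hEm : Measurable E := E_meas hφ x v
  -- shift estimate
  have hshift : ∀ y ∈ ringS d r, |E y| ≤ H * (2*r)^α * ‖v‖ := by
    intro y hy
    have hy2 : ‖y‖ ≤ 2*r := (mem_ringS.1 hy).2.le
    calc |E y| ≤ (H * ‖y‖ ^ α) * ‖v‖ := shift_bound hφ hH0 hα hH x v y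
      _ ≤ H * (2*r)^α * ‖v‖ := by
          apply mul_le_mul_of_nonneg_right _ (norm_nonneg v)
          exact mul_le_mul_of_nonneg_left
            (Real.rpow_le_rpow (norm_nonneg _) hy2 hα.le) hH0
  have hEst1 := ring_prod_bound hLam.le hK hr (c := H * (2*r)^α * ‖v‖) (by positivity)
    (hEm.aestronglyMeasurable.restrict) hshift
  -- cancellation estimate
  set b : Ed d →L[ℝ] ℝ := fderiv ℝ φ x - fderiv ℝ φ (x + v) with hb
  have hbpt : ∀ y ∈ ringS d r, |b y| ≤ ‖b‖ * (2*r) := by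
    intro y hy
    calc |b y| = ‖b y‖ := (Real.norm_eq_abs _).symm
      _ ≤ ‖b‖ * ‖y‖ := b.le_opNorm y
      _ ≤ ‖b‖ * (2*r) := mul_le_mul_of_nonneg_left (mem_ringS.1 hy).2.le (norm_nonneg b)
  have hbK := ring_prod_bound hLam.le hK hr (c := ‖b‖ * (2*r)) (by positivity)
    (b.continuous.measurable.aestronglyMeasurable.restrict) hbpt
  have hEbpt : ∀ y ∈ ringS d r, |E y - b y| ≤ 2 * H * (2*r)^α * (2*r) := by
    intro y hy
    have hy2 : ‖y‖ ≤ 2*r := (mem_ringS.1 hy).2.le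
    have hyb : b y = fderiv ℝ φ x y - fderiv ℝ φ (x + v) y := rfl
    have e : E y - b y = (φ (x + y) - φ x - fderiv ℝ φ x y)
        - (φ (x + v + y) - φ (x + v) - fderiv ℝ φ (x + v) y) := by
      rw [hyb]; simp only [hE]; ring
    have hsingle : ∀ z : Ed d, |φ (z + y) - φ z - fderiv ℝ φ z y| ≤ H * (2*r)^α * (2*r) := by
      intro z
      calc |φ (z + y) - φ z - fderiv ℝ φ z y| ≤ (H * ‖y‖ ^ α) * ‖y‖ :=
            taylor_bound hφ hH0 hα hH z y
        _ ≤ H * (2*r)^α * (2*r) := by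
            apply mul_le_mul _ hy2 (norm_nonneg y) (by positivity)
            exact mul_le_mul_of_nonneg_left
              (Real.rpow_le_rpow (norm_nonneg _) hy2 hα.le) hH0
    calc |E y - b y| ≤ |φ (x + y) - φ x - fderiv ℝ φ x y|
          + |φ (x + v + y) - φ (x + v) - fderiv ℝ φ (x + v) y| := by
          rw [e]; exact abs_sub _ _
      _ ≤ H * (2*r)^α * (2*r) + H * (2*r)^α * (2*r) := add_le_add (hsingle x) (hsingle (x+v))
      _ = 2 * H * (2*r)^α * (2*r) := by ring
  have hEbK := ring_prod_bound hLam.le hK hr (c := 2 * H * (2*r)^α * (2*r)) (by positivity)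
    ((hEm.sub b.continuous.measurable).aestronglyMeasurable.restrict) hEbpt
  have hid : ∫ y in ringS d r, E y * K y = ∫ y in ringS d r, (E y - b y) * K y := by
    have e : ∫ y in ringS d r, (E y - b y) * K y
        = (∫ y in ringS d r, E y * K y) - ∫ y in ringS d r, b y * K y := by
      rw [← integral_sub hEst1.1 hbK.1]
      apply setIntegral_congr_fun measurableSet_ringS
      intro y _
      show (E y - b y) * K y = E y * K y - b y * K y
      ring
    rw [e, ring_cancel hK hr b, sub_zero]
  refine ⟨hEst1.1, le_min ?_ hEst1.2⟩
  rw [hid]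
  exact hEbK.2


lemma two_pow_mul_half_pow (k : ℕ) : (2:ℝ)^(k+1) * ((1:ℝ)/2)^k = 2 := by
  rw [pow_succ, mul_comm ((2:ℝ)^k) 2, mul_assoc, ← mul_pow]
  norm_num

lemma lam_div_rout (Lam : ℝ) (k : ℕ) : Lam / ((2:ℝ)^k) = Lam * ((1:ℝ)/2)^k := by
  rw [div_eq_mul_inv]
  congr 1
  rw [one_div, inv_pow]

lemma two_rin (k : ℕ) : (2:ℝ) * ((1:ℝ)/2)^(k+1) = ((1:ℝ)/2)^k := by
  rw [pow_succ]; ring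

lemma opL_diff (hd : 1 ≤ d) (hLam : 0 < Lam) (hα : 0 < α) (hα1 : α < 1)
    (hφ : ContDiff ℝ 1 φ) (hCb : ∀ z, |φ z| ≤ Cb) (hH0 : 0 ≤ H)
    (hH : ∀ x y : Ed d, ‖fderiv ℝ φ x - fderiv ℝ φ y‖ ≤ H * ‖x - y‖ ^ α)
    (hK : K ∈ KernelClass d (1/2) lam Lam ρ) (x v : Ed d) :
    |opL d (1/2) K φ x - opL d (1/2) K φ (x + v)| ≤
      ((((1 - ((1:ℝ)/2)^α)⁻¹ + (2*((1:ℝ)/2)^α) / (((1:ℝ)/2)^α * (2*((1:ℝ)/2)^α - 1))) * 4)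
        + (((1 - (2:ℝ)^α*(1/2))⁻¹ + (2:ℝ)^α / ((2:ℝ)^α*(1/2) * ((2:ℝ)^α - 1))) * 8))
        * (Lam * H) * ‖v‖ ^ α := by
  -- basic geometric quantities
  set u₁ : ℝ := ((1:ℝ)/2)^α with hu₁def
  set w₂ : ℝ := (2:ℝ)^α with hw₂def
  have hu₁0 : 0 < u₁ := Real.rpow_pos_of_pos (by norm_num) α
  have hu₁1 : u₁ < 1 := Real.rpow_lt_one (by norm_num) (by norm_num) hα
  have hhalf_lt : (1:ℝ)/2 < u₁ := by
    have := Real.rpow_lt_rpow_of_exponent_gt (x := (1:ℝ)/2) (by norm_num) (by norm_num) hα1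
    rwa [Real.rpow_one] at this
  have hw₁ : 1 < 2 * u₁ := by linarith
  have hw₂0 : 0 < w₂ := Real.rpow_pos_of_pos (by norm_num) α
  have hw₂1 : 1 < w₂ := by
    have := Real.rpow_lt_rpow_of_exponent_lt (x := (2:ℝ)) (by norm_num) hα
    rwa [Real.rpow_zero] at this
  have hw₂2 : w₂ < 2 := by
    have := Real.rpow_lt_rpow_of_exponent_lt (x := (2:ℝ)) (by norm_num) hα1
    rwa [Real.rpow_one] at this
  have hu₂0 : 0 < w₂ * (1/2) := by linarith
  have hu₂1 : w₂ * (1/2) < 1 := by linarith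
  set h : ℝ := ‖v‖ with hhdef
  have hh0 : 0 ≤ h := norm_nonneg v
  have hhα : 0 ≤ h ^ α := Real.rpow_nonneg hh0 α
  set A₁ : ℝ := 4 * (Lam * H) with hA₁def
  set B₁ : ℝ := (2 * (Lam * H)) * h with hB₁def
  set A₂ : ℝ := (w₂ * (Lam * H)) * h with hA₂def
  set B₂ : ℝ := 4 * (w₂ * (Lam * H)) with hB₂def
  have hLH0 : 0 ≤ Lam * H := by positivity
  set E : Ed d → ℝ := fun y => (φ (x + y) - φ x) - (φ (x + v + y) - φ (x + v)) with hE
  set b : Ed d →L[ℝ] ℝ := fderiv ℝ φ x - fderiv ℝ φ (x + v) with hb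
  set D : Ed d → ℝ := fun y => incr d (1/2) φ x y - incr d (1/2) φ (x + v) y with hD
  -- full-space integrability
  have hfx := (opL_int_bound hd hLam hα hα1 hφ hCb hH0 hH hK x).1
  have hfx' := (opL_int_bound hd hLam hα hα1 hφ hCb hH0 hH hK (x + v)).1
  have hDK_eq : (fun y => D y * K y)
      = fun y => incr d (1/2) φ x y * K y - incr d (1/2) φ (x + v) y * K y := by
    funext y; simp only [hD]; ring
  have hDint : Integrable (fun y => D y * K y) := by
    rw [hDK_eq]; exact hfx.sub hfx'
  have hdiff : opL d (1/2) K φ x - opL d (1/2) K φ (x + v) = ∫ y, D y * K y := by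
    rw [opL, opL, hDK_eq, integral_sub hfx hfx']
  -- ring families
  set rin : ℕ → ℝ := fun k => ((1:ℝ)/2)^(k+1) with hrin
  set rout : ℕ → ℝ := fun k => (2:ℝ)^k with hrout
  have hrin_pos : ∀ k, 0 < rin k := fun k => by positivity
  have hrout_pos : ∀ k, 0 < rout k := fun k => by positivity
  -- pointwise identities of D on rings
  have hD_small : ∀ y : Ed d, ‖y‖ < 1 → D y = E y - b y := by
    intro y hy
    simp only [hD, hE]
    rw [incr_half, incr_half, if_pos hy, if_pos hy]
    have : b y = fderiv ℝ φ x y - fderiv ℝ φ (x + v) y := rfl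
    rw [this]
    ring
  have hD_big : ∀ y : Ed d, ¬ (‖y‖ < 1) → D y = E y := by
    intro y hy
    simp only [hD, hE]
    rw [incr_half, incr_half, if_neg hy, if_neg hy]
    ring
  -- per-ring bounds for inner rings
  have hin_bound : ∀ k : ℕ, |∫ y in ringS d (rin k), D y * K y|
      ≤ min (A₁ * u₁^k) (B₁ * (2*u₁)^k) := by
    intro k
    have hrk := hrin_pos k
    have h2rk : 2 * rin k = ((1:ℝ)/2)^k := two_rin k
    -- on this ring ‖y‖ < 1
    have hy1 : ∀ y ∈ ringS d (rin k), ‖y‖ < 1 := by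
      intro y hy
      have := (mem_ringS.1 hy).2
      rw [h2rk] at this
      exact lt_of_lt_of_le this (pow_le_one₀ (by norm_num) (by norm_num))
    -- identity on the ring
    have hEbint : IntegrableOn (fun y => b y * K y) (ringS d (rin k)) := by
      refine (ring_prod_bound hLam.le hK hrk (c := ‖b‖ * (2 * rin k)) (by positivity)
        (b.continuous.measurable.aestronglyMeasurable.restrict) ?_).1
      intro y hy
      calc |b y| = ‖b y‖ := (Real.norm_eq_abs _).symm
        _ ≤ ‖b‖ * ‖y‖ := b.le_opNorm y
        _ ≤ ‖b‖ * (2 * rin k) := mul_le_mul_of_nonneg_left (mem_ringS.1 hy).2.le (norm_nonneg b)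
    have hEint := (ring_E_est hLam hα hφ hH0 hH hK x v hrk).1
    have hid : ∫ y in ringS d (rin k), D y * K y = ∫ y in ringS d (rin k), E y * K y := by
      calc ∫ y in ringS d (rin k), D y * K y
          = ∫ y in ringS d (rin k), (E y * K y - b y * K y) := by
            apply setIntegral_congr_fun measurableSet_ringS
            intro y hy
            show D y * K y = E y * K y - b y * K y
            rw [hD_small y (hy1 y hy)]
            ring
        _ = (∫ y in ringS d (rin k), E y * K y) - ∫ y in ringS d (rin k), b y * K y :=
            integral_sub hEint hEbint
        _ = ∫ y in ringS d (rin k), E y * K y := by rw [ring_cancel hK hrk b, sub_zero]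
    rw [hid]
    refine le_trans (ring_E_est hLam hα hφ hH0 hH hK x v hrk).2 (le_of_eq ?_)
    -- algebraic conversion
    have hrp : (2 * rin k)^α = u₁^k := by
      rw [h2rk, pow_rpow_comm _ (by norm_num)]
    have hldr : Lam / rin k = Lam * 2^(k+1) := lam_div_rin Lam k
    have hhp : ((1:ℝ)/2)^k * 2^(k+1) = 2 := half_pow_mul_two_pow k
    congr 1
    · calc 2 * H * (2 * rin k)^α * (2 * rin k) * (Lam / rin k)
          = 2 * H * u₁^k * ((1:ℝ)/2)^k * (Lam * 2^(k+1)) := by rw [hrp, h2rk, hldr]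
        _ = (2 * H * u₁^k * Lam) * (((1:ℝ)/2)^k * 2^(k+1)) := by ring
        _ = A₁ * u₁^k := by rw [hhp, hA₁def]; ring
    · calc H * (2 * rin k)^α * ‖v‖ * (Lam / rin k)
          = H * u₁^k * h * (Lam * 2^(k+1)) := by rw [hrp, hldr, hhdef]
        _ = (2 * (Lam * H) * h) * (2^k * u₁^k) := by rw [pow_succ]; ring
        _ = B₁ * (2*u₁)^k := by rw [hB₁def, mul_pow]
  -- per-ring bounds for outer rings
  have hout_bound : ∀ k : ℕ, |∫ y in ringS d (rout k), D y * K y|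
      ≤ min (A₂ * (w₂ * (1/2))^k) (B₂ * w₂^k) := by
    intro k
    have hrk := hrout_pos k
    have hy1 : ∀ y ∈ ringS d (rout k), ¬ (‖y‖ < 1) := by
      intro y hy
      push_neg
      calc (1:ℝ) ≤ 2^k := one_le_pow₀ (by norm_num)
        _ ≤ ‖y‖ := (mem_ringS.1 hy).1
    have hid : ∫ y in ringS d (rout k), D y * K y = ∫ y in ringS d (rout k), E y * K y := by
      apply setIntegral_congr_fun measurableSet_ringS
      intro y hy
      show D y * K y = E y * K y
      rw [hD_big y (hy1 y hy)]
    rw [hid]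
    refine le_trans (ring_E_est hLam hα hφ hH0 hH hK x v hrk).2 (le_of_eq ?_)
    have h2rk : 2 * rout k = (2:ℝ)^(k+1) := by rw [hrout]; rw [pow_succ]; ring
    have hrp : (2 * rout k)^α = w₂ * w₂^k := by
      rw [h2rk, pow_rpow_comm _ (by norm_num), ← hw₂def, pow_succ]
      ring
    have hldr : Lam / rout k = Lam * ((1:ℝ)/2)^k := lam_div_rout Lam k
    have hhp : (2:ℝ)^(k+1) * ((1:ℝ)/2)^k = 2 := two_pow_mul_half_pow k
    rw [min_comm]
    congr 1
    · calc H * (2 * rout k)^α * ‖v‖ * (Lam / rout k)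
          = H * (w₂ * w₂^k) * h * (Lam * ((1:ℝ)/2)^k) := by rw [hrp, hldr]
        _ = (w₂ * (Lam * H) * h) * (w₂^k * ((1:ℝ)/2)^k) := by ring
        _ = A₂ * (w₂ * (1/2))^k := by rw [hA₂def, mul_pow]
    · calc 2 * H * (2 * rout k)^α * (2 * rout k) * (Lam / rout k)
          = 2 * H * (w₂ * w₂^k) * (2:ℝ)^(k+1) * (Lam * ((1:ℝ)/2)^k) := by
            rw [hrp, h2rk, hldr]
        _ = (2 * H * w₂ * w₂^k * Lam) * ((2:ℝ)^(k+1) * ((1:ℝ)/2)^k) := by ring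
        _ = B₂ * w₂^k := by rw [hhp, hB₂def]; ring
  -- summability of per-ring bounds
  have hsum_in_t : Summable (fun k : ℕ => min (A₁ * u₁^k) (B₁ * (2*u₁)^k)) :=
    Summable.of_nonneg_of_le (fun k => le_min (by positivity) (by positivity))
      (fun k => min_le_left _ _) ((summable_geometric_of_lt_one hu₁0.le hu₁1).mul_left A₁)
  have hsum_out_t : Summable (fun k : ℕ => min (A₂ * (w₂*(1/2))^k) (B₂ * w₂^k)) :=
    Summable.of_nonneg_of_le (fun k => le_min (by positivity) (by positivity))
      (fun k => min_le_left _ _) ((summable_geometric_of_lt_one hu₂0.le hu₂1).mul_left A₂)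
  -- tsum estimates
  have emm : (1:ℝ) - (1 - α) = α := by ring
  have huw₁ : u₁ ^ (1-α) * (2*u₁) ^ (1-(1-α)) = 1 := by
    rw [emm, Real.mul_rpow (by norm_num : (0:ℝ) ≤ 2) hu₁0.le]
    have hmid : u₁^(1-α) * u₁^α = u₁ := by
      have h1 : u₁^((1-α)+α) = u₁^(1-α)*u₁^α :=
        Real.rpow_add' hu₁0.le (by intro hc; linarith)
      have h2 : (1:ℝ)-α+α = 1 := by ring
      rw [h2] at h1
      rw [← h1, Real.rpow_one]
    calc u₁^(1-α) * ((2:ℝ)^α * u₁^α) = (2:ℝ)^α * (u₁^(1-α) * u₁^α) := by ring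
      _ = (2:ℝ)^α * u₁ := by rw [hmid]
      _ = 1 := by
          rw [hu₁def, ← Real.mul_rpow (by norm_num) (by norm_num),
            show (2:ℝ) * ((1:ℝ)/2) = 1 from by norm_num, Real.one_rpow]
  have huw₂ : (w₂*(1/2)) ^ α * w₂ ^ (1-α) = 1 := by
    rw [Real.mul_rpow hw₂0.le (by norm_num : (0:ℝ) ≤ 1/2)]
    have hmid : w₂^α * w₂^(1-α) = w₂ := by
      have h1 : w₂^(α+(1-α)) = w₂^α*w₂^(1-α) :=
        Real.rpow_add' hw₂0.le (by intro hc; linarith)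
      have h2 : α+((1:ℝ)-α) = 1 := by ring
      rw [h2] at h1
      rw [← h1, Real.rpow_one]
    calc w₂^α * ((1:ℝ)/2)^α * w₂^(1-α) = (w₂^α * w₂^(1-α)) * ((1:ℝ)/2)^α := by ring
      _ = w₂ * ((1:ℝ)/2)^α := by rw [hmid]
      _ = 1 := by
          rw [hw₂def, ← Real.mul_rpow (by norm_num) (by norm_num),
            show (2:ℝ) * ((1:ℝ)/2) = 1 from by norm_num, Real.one_rpow]
  have htsum_in := tsum_min_geom hu₁0 hu₁1 hw₁ (A := A₁) (B := B₁)
    (by positivity) (by positivity) (by linarith) (by linarith) huw₁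
  rw [emm] at htsum_in
  have htsum_out := tsum_min_geom hu₂0 hu₂1 hw₂1 (A := A₂) (B := B₂)
    (by positivity) (by positivity) hα.le hα1.le huw₂
  -- product bounds
  have hLHsum : (Lam*H)^(1-α)*(Lam*H)^α = Lam*H := by
    have h1 : (Lam*H)^((1-α)+α) = (Lam*H)^(1-α)*(Lam*H)^α :=
      Real.rpow_add' hLH0 (by intro hc; linarith)
    have h2 : (1:ℝ)-α+α = 1 := by ring
    rw [h2] at h1
    rw [← h1, Real.rpow_one]
  have h42 : (4:ℝ)^(1-α)*(2:ℝ)^α ≤ 4 := by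
    have e1 : (2:ℝ)^α ≤ (4:ℝ)^α := Real.rpow_le_rpow (by norm_num) (by norm_num) hα.le
    have e2 : (4:ℝ)^(1-α)*(4:ℝ)^α = 4 := by
      rw [← Real.rpow_add (by norm_num : (0:ℝ) < 4),
        show (1:ℝ)-α+α = 1 from by ring, Real.rpow_one]
    calc (4:ℝ)^(1-α)*(2:ℝ)^α ≤ (4:ℝ)^(1-α)*(4:ℝ)^α :=
          mul_le_mul_of_nonneg_left e1 (Real.rpow_nonneg (by norm_num) _)
      _ = 4 := e2
  have hprod_in : A₁^(1-α) * B₁^α ≤ 4 * (Lam*H) * h^α := by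
    have e : A₁^(1-α) * B₁^α
        = ((4:ℝ)^(1-α)*(2:ℝ)^α) * ((Lam*H)^(1-α)*(Lam*H)^α) * h^α := by
      rw [hA₁def, hB₁def, Real.mul_rpow (by norm_num : (0:ℝ) ≤ 4) hLH0,
        Real.mul_rpow (by positivity) hh0, Real.mul_rpow (by norm_num : (0:ℝ) ≤ 2) hLH0]
      ring
    rw [e, hLHsum]
    exact mul_le_mul_of_nonneg_right (mul_le_mul_of_nonneg_right h42 hLH0) hhα
  have hprod_out : A₂^α * B₂^(1-α) ≤ 8 * (Lam*H) * h^α := by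
    have hwLH0 : 0 ≤ w₂*(Lam*H) := by positivity
    have hwLHsum : (w₂*(Lam*H))^α*(w₂*(Lam*H))^(1-α) = w₂*(Lam*H) := by
      have h1 : (w₂*(Lam*H))^(α+(1-α)) = (w₂*(Lam*H))^α*(w₂*(Lam*H))^(1-α) :=
        Real.rpow_add' hwLH0 (by intro hc; linarith)
      have h2 : α+((1:ℝ)-α) = 1 := by ring
      rw [h2] at h1
      rw [← h1, Real.rpow_one]
    have e : A₂^α * B₂^(1-α)
        = (4:ℝ)^(1-α) * ((w₂*(Lam*H))^α*(w₂*(Lam*H))^(1-α)) * h^α := by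
      rw [hA₂def, hB₂def, Real.mul_rpow hwLH0 hh0,
        Real.mul_rpow (by norm_num : (0:ℝ) ≤ 4) hwLH0]
      ring
    rw [e, hwLHsum]
    have h4 : (4:ℝ)^(1-α) ≤ 4 := by
      have := Real.rpow_le_rpow_of_exponent_le (by norm_num : (1:ℝ) ≤ 4)
        (by linarith : 1-α ≤ (1:ℝ))
      rwa [Real.rpow_one] at this
    have hstep : (4:ℝ)^(1-α) * (w₂*(Lam*H)) ≤ 8 * (Lam*H) := by
      have hA : (4:ℝ)^(1-α) * (w₂*(Lam*H)) ≤ 4 * (w₂*(Lam*H)) :=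
        mul_le_mul_of_nonneg_right h4 hwLH0
      have hB : 4 * (w₂*(Lam*H)) ≤ 4 * (2*(Lam*H)) := by
        apply mul_le_mul_of_nonneg_left _ (by norm_num : (0:ℝ) ≤ 4)
        exact mul_le_mul_of_nonneg_right hw₂2.le hLH0
      calc (4:ℝ)^(1-α) * (w₂*(Lam*H)) ≤ 4 * (2*(Lam*H)) := le_trans hA hB
        _ = 8 * (Lam*H) := by ring
    exact mul_le_mul_of_nonneg_right hstep hhα
  -- region bounds
  have hdisj_in : Pairwise (Function.onFun Disjoint fun k : ℕ => ringS d (rin k)) := by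
    simp only [hrin]; exact inner_disj d
  have hdisj_out : Pairwise (Function.onFun Disjoint fun k : ℕ => ringS d (rout k)) := by
    simp only [hrout]; exact outer_disj d
  have hreg_in : |∫ y in ⋃ k, ringS d (rin k), D y * K y|
      ≤ ∑' k, min (A₁ * u₁^k) (B₁ * (2*u₁)^k) :=
    region_sum_bound hdisj_in hDint.integrableOn hin_bound hsum_in_t
  have hreg_out : |∫ y in ⋃ k, ringS d (rout k), D y * K y|
      ≤ ∑' k, min (A₂ * (w₂*(1/2))^k) (B₂ * w₂^k) :=
    region_sum_bound hdisj_out hDint.integrableOn hout_bound hsum_out_t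
  have hball_ae : (ball (0:Ed d) 1 : Set (Ed d)) =ᵐ[volume]
      (ball (0:Ed d) 1 \ ({0} : Set (Ed d))) := by
    refine (MeasureTheory.diff_ae_eq_self.2 ?_).symm
    exact le_antisymm (le_trans (measure_mono Set.inter_subset_right)
      (le_of_eq (vol_singleton_zero d hd))) zero_le
  have hball_val : |∫ y in (ball (0:Ed d) 1 : Set (Ed d)), D y * K y|
      ≤ ∑' k, min (A₁ * u₁^k) (B₁ * (2*u₁)^k) := by
    rw [show (∫ y in (ball (0:Ed d) 1 : Set (Ed d)), D y * K y)
        = ∫ y in ball (0:Ed d) 1 \ ({0} : Set (Ed d)), D y * K y from by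
      exact congrArg (fun μ => ∫ y, D y * K y ∂μ) (Measure.restrict_congr_set hball_ae)]
    rw [show (ball (0:Ed d) 1 \ ({0} : Set (Ed d))) = ⋃ k, ringS d (rin k) from by
      simp only [hrin]; exact inner_tiling d]
    exact hreg_in
  have hco_val : |∫ y in ((ball (0:Ed d) 1)ᶜ : Set (Ed d)), D y * K y|
      ≤ ∑' k, min (A₂ * (w₂*(1/2))^k) (B₂ * w₂^k) := by
    rw [show ((ball (0:Ed d) 1)ᶜ : Set (Ed d)) = ⋃ k, ringS d (rout k) from by
      simp only [hrout]; exact outer_tiling d]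
    exact hreg_out
  -- nonnegativity of coefficients
  have hcoef₁0 : 0 ≤ (1 - u₁)⁻¹ + (2*u₁) / (u₁ * (2*u₁ - 1)) := by
    apply add_nonneg (inv_nonneg.2 (by linarith))
    apply div_nonneg (by linarith)
    apply mul_nonneg hu₁0.le
    linarith
  have hcoef₂0 : 0 ≤ (1 - w₂*(1/2))⁻¹ + w₂ / ((w₂*(1/2)) * (w₂ - 1)) := by
    apply add_nonneg (inv_nonneg.2 (by linarith))
    apply div_nonneg hw₂0.le
    apply mul_nonneg hu₂0.le
    linarith
  -- assemble
  calc |opL d (1/2) K φ x - opL d (1/2) K φ (x + v)|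
      = |∫ y, D y * K y| := by rw [hdiff]
    _ ≤ |∫ y in (ball (0:Ed d) 1 : Set (Ed d)), D y * K y|
        + |∫ y in ((ball (0:Ed d) 1)ᶜ : Set (Ed d)), D y * K y| := by
        rw [show (∫ y, D y * K y)
            = (∫ y in (ball (0:Ed d) 1 : Set (Ed d)), D y * K y)
              + ∫ y in ((ball (0:Ed d) 1)ᶜ : Set (Ed d)), D y * K y from
          (integral_add_compl measurableSet_ball hDint).symm]
        exact abs_add_le _ _
    _ ≤ (∑' k, min (A₁ * u₁^k) (B₁ * (2*u₁)^k))
        + ∑' k, min (A₂ * (w₂*(1/2))^k) (B₂ * w₂^k) := add_le_add hball_val hco_val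
    _ ≤ ((1 - u₁)⁻¹ + (2*u₁) / (u₁ * (2*u₁ - 1))) * (A₁^(1-α) * B₁^α)
        + ((1 - w₂*(1/2))⁻¹ + w₂ / ((w₂*(1/2)) * (w₂ - 1))) * (A₂^α * B₂^(1-α)) :=
        add_le_add htsum_in htsum_out
    _ ≤ ((1 - u₁)⁻¹ + (2*u₁) / (u₁ * (2*u₁ - 1))) * (4 * (Lam*H) * h^α)
        + ((1 - w₂*(1/2))⁻¹ + w₂ / ((w₂*(1/2)) * (w₂ - 1))) * (8 * (Lam*H) * h^α) :=
        add_le_add (mul_le_mul_of_nonneg_left hprod_in hcoef₁0)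
          (mul_le_mul_of_nonneg_left hprod_out hcoef₂0)
    _ = ((((1 - u₁)⁻¹ + (2*u₁) / (u₁ * (2*u₁ - 1))) * 4)
        + (((1 - w₂*(1/2))⁻¹ + w₂ / ((w₂*(1/2)) * (w₂ - 1))) * 8)) * (Lam * H) * h ^ α := by
        ring

end main

/-- for `s = 1/2` and `α ∈ (0,1)`, the Pucci operators map `C^{1,α}(ℝ^d)` to
`C^{0,α}(ℝ^d)` with a universal seminorm bound. -/
theorem statement8 (d : ℕ) (hd : 1 ≤ d) (Lam α : ℝ) (hLam : 0 < Lam) (hα : α ∈ Ioo (0:ℝ) 1) :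
    ∃ C : ℝ, 0 < C ∧ ∀ lam ρ : ℝ, 0 < lam → lam ≤ Lam → 0 ≤ ρ →
      ∀ φ : Ed d → ℝ, ContDiff ℝ 1 φ → (∃ Cb : ℝ, ∀ x, |φ x| ≤ Cb) →
        (∃ Cb' : ℝ, ∀ x, ‖fderiv ℝ φ x‖ ≤ Cb') →
      ∀ H : ℝ, 0 ≤ H → (∀ x y : Ed d, ‖fderiv ℝ φ x - fderiv ℝ φ y‖ ≤ H * ‖x - y‖ ^ α) →
        (∀ x : Ed d,
          BddBelow ((fun K => opL d (1/2) K φ x) '' KernelClass d (1/2) lam Lam ρ) ∧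
          BddAbove ((fun K => opL d (1/2) K φ x) '' KernelClass d (1/2) lam Lam ρ)) ∧
        ∀ x y : Ed d,
          |pucciInf d (1/2) lam Lam ρ φ x - pucciInf d (1/2) lam Lam ρ φ y| ≤
            C * H * ‖x - y‖ ^ α ∧
          |pucciSup d (1/2) lam Lam ρ φ x - pucciSup d (1/2) lam Lam ρ φ y| ≤
            C * H * ‖x - y‖ ^ α := by
  obtain ⟨hα0, hα1⟩ := hα
  have hu₁0 : 0 < ((1:ℝ)/2)^α := Real.rpow_pos_of_pos (by norm_num) α
  have hu₁1 : ((1:ℝ)/2)^α < 1 := Real.rpow_lt_one (by norm_num) (by norm_num) hα0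
  have hhalf_lt : (1:ℝ)/2 < ((1:ℝ)/2)^α := by
    have := Real.rpow_lt_rpow_of_exponent_gt (x := (1:ℝ)/2) (by norm_num) (by norm_num) hα1
    rwa [Real.rpow_one] at this
  have hw₂0 : 0 < (2:ℝ)^α := Real.rpow_pos_of_pos (by norm_num) α
  have hw₂1 : 1 < (2:ℝ)^α := by
    have := Real.rpow_lt_rpow_of_exponent_lt (x := (2:ℝ)) (by norm_num) hα0
    rwa [Real.rpow_zero] at this
  have hw₂2 : (2:ℝ)^α < 2 := by
    have := Real.rpow_lt_rpow_of_exponent_lt (x := (2:ℝ)) (by norm_num) hα1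
    rwa [Real.rpow_one] at this
  set C0 : ℝ := ((((1 - ((1:ℝ)/2)^α)⁻¹ + (2*((1:ℝ)/2)^α) / (((1:ℝ)/2)^α * (2*((1:ℝ)/2)^α - 1))) * 4)
        + (((1 - (2:ℝ)^α*(1/2))⁻¹ + (2:ℝ)^α / ((2:ℝ)^α*(1/2) * ((2:ℝ)^α - 1))) * 8)) * Lam
    with hC0
  have hcoef₁0 : 0 ≤ (1 - ((1:ℝ)/2)^α)⁻¹
      + (2*((1:ℝ)/2)^α) / (((1:ℝ)/2)^α * (2*((1:ℝ)/2)^α - 1)) := by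
    apply add_nonneg (inv_nonneg.2 (by linarith))
    apply div_nonneg (by linarith)
    apply mul_nonneg hu₁0.le
    linarith
  have hcoef₂0 : 0 ≤ (1 - (2:ℝ)^α*(1/2))⁻¹
      + (2:ℝ)^α / ((2:ℝ)^α*(1/2) * ((2:ℝ)^α - 1)) := by
    apply add_nonneg (inv_nonneg.2 (by linarith))
    apply div_nonneg hw₂0.le
    apply mul_nonneg (by linarith)
    linarith
  have hC00 : 0 ≤ C0 := by
    rw [hC0]
    apply mul_nonneg _ hLam.le
    have : (0:ℝ) ≤ 4 := by norm_num
    nlinarith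
  refine ⟨C0 + 1, by linarith, ?_⟩
  intro lam ρ hlam hlamLam hρ φ hφ hCbE hCb'E H hH0 hH
  obtain ⟨Cb, hCb⟩ := hCbE
  have hBdd : ∀ x : Ed d,
      BddBelow ((fun K => opL d (1/2) K φ x) '' KernelClass d (1/2) lam Lam ρ) ∧
      BddAbove ((fun K => opL d (1/2) K φ x) '' KernelClass d (1/2) lam Lam ρ) := by
    intro x
    set M : ℝ := 2 * Lam * H * (1 - ((1:ℝ)/2)^α)⁻¹ + (2 * Cb) * Lam * 2 with hM
    constructor
    · refine ⟨-M, ?_⟩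
      rintro z ⟨K, hK, rfl⟩
      have := (opL_int_bound hd hLam hα0 hα1 hφ hCb hH0 hH hK x).2
      have := abs_le.1 this
      linarith [this.1]
    · refine ⟨M, ?_⟩
      rintro z ⟨K, hK, rfl⟩
      have := (opL_int_bound hd hLam hα0 hα1 hφ hCb hH0 hH hK x).2
      have := abs_le.1 this
      linarith [this.2]
  refine ⟨hBdd, ?_⟩
  intro x y
  have hc0 : 0 ≤ (C0 + 1) * H * ‖x - y‖ ^ α := by
    have : 0 ≤ ‖x - y‖ ^ α := Real.rpow_nonneg (norm_nonneg _) α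
    have h1 : 0 ≤ C0 + 1 := by linarith
    positivity
  have hdiffK : ∀ K ∈ KernelClass d (1/2) lam Lam ρ,
      |opL d (1/2) K φ x - opL d (1/2) K φ y| ≤ (C0 + 1) * H * ‖x - y‖ ^ α := by
    intro K hK
    have := opL_diff hd hLam hα0 hα1 hφ hCb hH0 hH hK x (y - x)
    rw [show x + (y - x) = y from by abel] at this
    calc |opL d (1/2) K φ x - opL d (1/2) K φ y|
        ≤ ((((1 - ((1:ℝ)/2)^α)⁻¹ + (2*((1:ℝ)/2)^α) / (((1:ℝ)/2)^α * (2*((1:ℝ)/2)^α - 1))) * 4)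
          + (((1 - (2:ℝ)^α*(1/2))⁻¹ + (2:ℝ)^α / ((2:ℝ)^α*(1/2) * ((2:ℝ)^α - 1))) * 8))
          * (Lam * H) * ‖y - x‖ ^ α := this
      _ = C0 * H * ‖x - y‖ ^ α := by rw [hC0, norm_sub_rev y x]; ring
      _ ≤ (C0 + 1) * H * ‖x - y‖ ^ α := by
          have h1 : 0 ≤ H * ‖x - y‖ ^ α :=
            mul_nonneg hH0 (Real.rpow_nonneg (norm_nonneg _) α)
          nlinarith
  constructor
  · exact abs_csInf_sub_csInf hc0 hdiffK (hBdd x).1 (hBdd y).1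
  · exact abs_csSup_sub_csSup hc0 hdiffK (hBdd x).2 (hBdd y).2
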